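/- Let p ≥ 1 be an integer, set δ = 1 if p is odd and δ = 2 if p is even, and let c_p(u) = u + ∑_{k=1}^{⌊p/2⌋} c_k u^{2k} with c_k = (−1)^{k+1}(2k)!/(4^k(k!)²(2k−1)). Then for every real u with 0 ≤ u < 1, |(1 + c_p(−u))·(1 + c_p(u)) − 1| ≤ (2√(1+u²) + a₁(u)·u^{p+1})·a₁(u)·u^{p+δ}, where a₁(u) = 1/(1+√(1−u²)). -/

import Mathlib

open scoped BigOperators

/-- `a₁(u) = 1/(1+√(1−u²))`. -/
noncomputable def a1 (u : ℝ) : ℝ := 1 / (1 + Real.sqrt (1 - u ^ 2))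

/-- `a₂(u) = (a₁(u) − 1/2)/u²`. -/
noncomputable def a2 (u : ℝ) : ℝ := (a1 u - 1 / 2) / u ^ 2

/-- `b₁(u) = u²a₁(u)²/√(1−u²) + 2a₁(u)`. -/
noncomputable def b1 (u : ℝ) : ℝ := u ^ 2 * a1 u ^ 2 / Real.sqrt (1 - u ^ 2) + 2 * a1 u

/-- `b₂(u) = a₁(u)²/√(1−u²) + 2a₂(u)`. -/
noncomputable def b2 (u : ℝ) : ℝ := a1 u ^ 2 / Real.sqrt (1 - u ^ 2) + 2 * a2 u

/-- `c_k = (−1)^{k+1}(2k)!/(4^k (k!)² (2k−1))`, the Taylor coefficients of `√(1+u²)−1`. -/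
noncomputable def ck (k : ℕ) : ℝ :=
  (-1 : ℝ) ^ (k + 1) * (Nat.factorial (2 * k) : ℝ) /
    ((4 : ℝ) ^ k * ((Nat.factorial k : ℝ)) ^ 2 * ((2 * k - 1 : ℕ) : ℝ))

/-- `c_p(u) = u + ∑_{k=1}^{⌊p/2⌋} c_k u^{2k}`, the degree-`p` truncation of
the Taylor series of `√(1+u²)+u−1` at `0`. -/
noncomputable def cpReal (p : ℕ) (u : ℝ) : ℝ :=
  u + ∑ k ∈ Finset.Icc 1 (p / 2), ck k * u ^ (2 * k)

open Finset

/-- `dd k = centralBinom k / ((2k-1) 4^k)` (with real `2k-1`, so `dd 0 = -1`). -/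
noncomputable def dd (k : ℕ) : ℝ := (Nat.centralBinom k : ℝ) / ((2 * (k : ℝ) - 1) * 4 ^ k)

lemma dd_zero : dd 0 = -1 := by simp [dd, Nat.centralBinom]

lemma centralBinom_cast_succ (k : ℕ) :
    (Nat.centralBinom (k + 1) : ℝ) = 2 * (2 * k + 1) * catalan k := by
  have h1 := Nat.succ_mul_centralBinom_succ k
  have h2 := succ_mul_catalan_eq_centralBinom k
  have h3 : (k + 1) * Nat.centralBinom (k + 1) = (k + 1) * (2 * (2 * k + 1) * catalan k) := by
    rw [h1, ← h2]; ring
  have h4 := Nat.eq_of_mul_eq_mul_left (Nat.succ_pos k) h3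
  exact_mod_cast congrArg (Nat.cast (R := ℝ)) h4

lemma dd_succ (k : ℕ) : dd (k + 1) = (catalan k : ℝ) / (2 * 4 ^ k) := by
  have h : (2 * ((k : ℝ) + 1) - 1) = 2 * k + 1 := by ring
  rw [dd, centralBinom_cast_succ]
  push_cast
  rw [h]
  have hk : (2 * (k : ℝ) + 1) ≠ 0 := by positivity
  field_simp
  ring

lemma catalan_pos' (k : ℕ) : 0 < catalan k := by
  have := succ_mul_catalan_eq_centralBinom k
  have h := Nat.centralBinom_pos k
  rcases Nat.eq_zero_or_pos (catalan k) with h0 | h0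
  · rw [h0, mul_zero] at this; omega
  · exact h0

lemma dd_succ_pos (k : ℕ) : 0 < dd (k + 1) := by
  rw [dd_succ]
  have := catalan_pos' k
  positivity

lemma dd_succ_le (k : ℕ) : dd (k + 2) ≤ dd (k + 1) := by
  rw [dd_succ, dd_succ]
  have h1 := centralBinom_cast_succ k
  have h2 : (Nat.centralBinom (k+1) : ℝ) = ((k:ℝ) + 2) * catalan (k + 1) := by
    exact_mod_cast congrArg (Nat.cast (R := ℝ)) (succ_mul_catalan_eq_centralBinom (k+1)) |>.symm
  have h3 : ((k:ℝ) + 2) * catalan (k + 1) = 2 * (2 * k + 1) * catalan k := by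
    rw [← h2, h1]
  have hc0 : (0:ℝ) ≤ (catalan k : ℝ) := Nat.cast_nonneg _
  have hk0 : (0:ℝ) ≤ (k : ℝ) := Nat.cast_nonneg _
  have h4 : (0:ℝ) < 4 ^ k := by positivity
  rw [div_le_div_iff₀ (by positivity) (by positivity)]
  have h5 : (4:ℝ) ^ (k+1) = 4 * 4 ^ k := by ring
  rw [h5]
  nlinarith [h3, hc0, hk0, h4, mul_nonneg hc0 hk0]

lemma dd_telescope (k : ℕ) :
    dd (k + 1) = (Nat.centralBinom k : ℝ) / 4 ^ k - (Nat.centralBinom (k+1) : ℝ) / 4 ^ (k+1) := by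
  rw [dd_succ, centralBinom_cast_succ]
  have h2 : (Nat.centralBinom k : ℝ) = (k + 1) * catalan k := by
    exact_mod_cast congrArg (Nat.cast (R := ℝ)) (succ_mul_catalan_eq_centralBinom k) |>.symm
  rw [h2]
  have : (4:ℝ) ^ (k+1) = 4 * 4 ^ k := by ring
  rw [this]
  field_simp
  ring

lemma dd_add_le (k m : ℕ) : dd (k + 1 + m) ≤ dd (k + 1) := by
  induction m with
  | zero => exact le_rfl
  | succ n ih =>
    have h : dd (k + 1 + (n + 1)) ≤ dd (k + 1 + n) := by
      rw [show k + 1 + (n + 1) = (k + n) + 2 from by ring, show k + 1 + n = (k + n) + 1 from by ring]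
      exact dd_succ_le (k + n)
    exact h.trans ih

lemma sum_dd_succ_le (N : ℕ) : ∑ k ∈ range N, dd (k + 1) ≤ 1 := by
  have h : ∀ k ∈ range N, dd (k+1) = (fun j => (Nat.centralBinom j : ℝ) / 4 ^ j) k - (fun j => (Nat.centralBinom j : ℝ) / 4 ^ j) (k+1) := by
    intro k _; exact dd_telescope k
  rw [Finset.sum_congr rfl h, Finset.sum_range_sub']
  have : (0:ℝ) ≤ (Nat.centralBinom N : ℝ) / 4 ^ N := by positivity
  simp only [Nat.centralBinom_zero, pow_zero, Nat.cast_one]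
  linarith [this]

lemma sum_abs_dd_le (N : ℕ) : ∑ k ∈ range N, |dd k| ≤ 2 := by
  cases N with
  | zero => simp
  | succ n =>
    rw [Finset.sum_range_succ']
    have h1 : ∑ j ∈ range n, |dd (j + 1)| = ∑ j ∈ range n, dd (j + 1) :=
      Finset.sum_congr rfl fun j _ => abs_of_pos (dd_succ_pos j)
    have h2 := sum_dd_succ_le n
    have h3 : |dd 0| = 1 := by rw [dd_zero]; simp
    rw [h1, h3]; linarith

lemma summable_norm_f {y : ℝ} (hy : |y| ≤ 1) : Summable fun k => ‖-dd k * y ^ k‖ := by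
  apply summable_of_sum_range_le (c := 2) (fun n => norm_nonneg _)
  intro n
  calc ∑ k ∈ range n, ‖-dd k * y ^ k‖ ≤ ∑ k ∈ range n, |dd k| := by
        apply Finset.sum_le_sum
        intro k _
        rw [Real.norm_eq_abs, abs_mul, abs_neg, abs_pow]
        have h1 : |y| ^ k ≤ 1 := pow_le_one₀ (abs_nonneg y) hy
        have h2 : (0:ℝ) ≤ |dd k| := abs_nonneg _
        nlinarith
    _ ≤ 2 := sum_abs_dd_le n

lemma B_eval (n : ℕ) : ∑ k ∈ range (n + 1), dd k * dd (n - k) =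
    if n = 0 then 1 else if n = 1 then -1 else 0 := by
  match n with
  | 0 => simp [dd_zero]
  | 1 => simp [Finset.sum_range_succ, dd_zero, dd_succ]; norm_num
  | (m + 2) =>
    simp only [if_neg (by omega : ¬ m + 2 = 0), if_neg (by omega : ¬ m + 2 = 1)]
    rw [show m + 2 + 1 = (m + 2) + 1 from rfl, Finset.sum_range_succ, Finset.sum_range_succ']
    have hmid : ∑ j ∈ range (m + 1), dd (j + 1) * dd (m + 2 - (j + 1)) =
        (catalan (m + 1) : ℝ) / (4 * 4 ^ m) := by
      have hterm : ∀ j ∈ range (m + 1), dd (j + 1) * dd (m + 2 - (j + 1)) =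
          ((catalan j * catalan (m - j) : ℕ) : ℝ) / (4 * 4 ^ m) := by
        intro j hj
        have hjm : j ≤ m := by simpa using Nat.lt_succ_iff.mp (Finset.mem_range.mp hj)
        have hpow : (4:ℝ) ^ j * 4 ^ (m - j) = 4 ^ m := by
          rw [← pow_add]; congr 1; omega
        rw [show m + 2 - (j + 1) = (m - j) + 1 from by omega, dd_succ, dd_succ,
          div_mul_div_comm]
        push_cast
        rw [show (2:ℝ) * 4 ^ j * (2 * 4 ^ (m - j)) = 4 * (4 ^ j * 4 ^ (m - j)) from by ring, hpow]
      rw [Finset.sum_congr rfl hterm, ← Finset.sum_div]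
      congr 1
      have hcat : catalan (m + 1) = ∑ k ∈ range (m + 1), catalan k * catalan (m - k) := by
        rw [catalan_succ', Nat.sum_antidiagonal_eq_sum_range_succ
          (fun x y => catalan x * catalan y) m]
      rw [hcat]
      push_cast
      ring
    rw [hmid]
    have hdd : dd (m + 2) = (catalan (m + 1) : ℝ) / (2 * 4 ^ (m + 1)) := dd_succ (m + 1)
    rw [show m + 2 - 0 = m + 2 from rfl, show m + 2 - (m + 2) = 0 from by omega, dd_zero, hdd]
    have h4 : (0:ℝ) < 4 ^ m := by positivity
    field_simp
    ring

lemma hasSum_sqrt_one_sub {y : ℝ} (hy : |y| ≤ 1) :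
    HasSum (fun k => -dd k * y ^ k) (Real.sqrt (1 - y)) := by
  have hnorm := summable_norm_f hy
  have hsum : Summable fun k => -dd k * y ^ k := hnorm.of_norm
  set L := ∑' k, -dd k * y ^ k with hL
  have hcauchy := tsum_mul_tsum_eq_tsum_sum_antidiagonal_of_summable_norm hnorm hnorm
  have hterm : ∀ n : ℕ, (∑ kl ∈ Finset.HasAntidiagonal.antidiagonal n,
      (-dd kl.1 * y ^ kl.1) * (-dd kl.2 * y ^ kl.2))
      = (if n = 0 then 1 else if n = 1 then -1 else 0) * y ^ n := by
    intro n
    rw [Nat.sum_antidiagonal_eq_sum_range_succ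
      (fun i j => (-dd i * y ^ i) * (-dd j * y ^ j)) n, ← B_eval n, Finset.sum_mul]
    apply Finset.sum_congr rfl
    intro k hk
    have hk' : k ≤ n := Nat.lt_succ_iff.mp (Finset.mem_range.mp hk)
    have hpow : y ^ k * y ^ (n - k) = y ^ n := by rw [← pow_add]; congr 1; omega
    rw [show (-dd k * y ^ k) * (-dd (n - k) * y ^ (n - k))
      = dd k * dd (n - k) * (y ^ k * y ^ (n - k)) from by ring, hpow]
  have hsq : L * L = 1 - y := by
    rw [hL, hcauchy, tsum_congr hterm, tsum_eq_sum (s := ({0, 1} : Finset ℕ)) ?_]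
    · norm_num; ring
    · intro n hn
      have h0 : n ≠ 0 := by intro h; exact hn (by simp [h])
      have h1 : n ≠ 1 := by intro h; exact hn (by simp [h])
      simp [h0, h1]
  have htail : |∑' k, -dd (k + 1) * y ^ (k + 1)| ≤ 1 := by
    have hs : Summable fun k => ‖-dd (k + 1) * y ^ (k + 1)‖ :=
      (summable_nat_add_iff 1).2 hnorm
    calc |∑' k, -dd (k + 1) * y ^ (k + 1)| ≤ ∑' k, ‖-dd (k + 1) * y ^ (k + 1)‖ :=
          norm_tsum_le_tsum_norm hs
      _ ≤ 1 := by
          apply Real.tsum_le_of_sum_range_le (fun n => norm_nonneg _)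
          intro n
          calc ∑ k ∈ range n, ‖-dd (k + 1) * y ^ (k + 1)‖
              ≤ ∑ k ∈ range n, dd (k + 1) := by
                apply Finset.sum_le_sum
                intro k _
                rw [Real.norm_eq_abs, abs_mul, abs_neg, abs_pow,
                  abs_of_pos (dd_succ_pos k)]
                have h1 : |y| ^ (k + 1) ≤ 1 := pow_le_one₀ (abs_nonneg y) hy
                have h2 := (dd_succ_pos k).le
                nlinarith
            _ ≤ 1 := sum_dd_succ_le n
  have hnonneg : 0 ≤ L := by
    have h0 : L = 1 + ∑' k, -dd (k + 1) * y ^ (k + 1) := by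
      rw [hL, Summable.tsum_eq_zero_add hsum]
      norm_num [dd_zero]
    rw [h0]
    linarith [(abs_le.mp htail).1]
  have hfin : Real.sqrt (1 - y) = L := by
    rw [← hsq, Real.sqrt_mul_self hnonneg]
  exact (Summable.hasSum_iff hsum).2 hfin.symm

lemma ck_eq (j : ℕ) : ck (j + 1) = (-1 : ℝ) ^ (j + 2) * dd (j + 1) := by
  have hcb : (Nat.centralBinom (j + 1) : ℝ) * (Nat.factorial (j + 1)) * (Nat.factorial (j + 1))
      = (Nat.factorial (2 * (j + 1)) : ℝ) := by
    have h := Nat.choose_mul_factorial_mul_factorial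
      (show j + 1 ≤ 2 * (j + 1) from by omega)
    have h2 : 2 * (j + 1) - (j + 1) = j + 1 := by omega
    rw [h2] at h
    rw [Nat.centralBinom]
    exact_mod_cast congrArg (Nat.cast (R := ℝ)) h
  unfold ck dd
  rw [show 2 * (j + 1) - 1 = 2 * j + 1 from by omega]
  have hc1 : ((2 * j + 1 : ℕ) : ℝ) = 2 * (j : ℝ) + 1 := by push_cast; ring
  have hc2 : (2 * ((j : ℝ) + 1) - 1) = 2 * (j : ℝ) + 1 := by ring
  rw [hc1]
  push_cast
  rw [hc2]
  have h1 : (0:ℝ) < 2 * (j:ℝ) + 1 := by positivity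
  have h2 : (0:ℝ) < (Nat.factorial (j + 1) : ℝ) := by
    exact_mod_cast Nat.factorial_pos (j + 1)
  have h3 : (0:ℝ) < (4:ℝ) ^ (j + 1) := by positivity
  field_simp
  push_cast at hcb ⊢
  linear_combination (-1:ℝ) * hcb

set_option maxHeartbeats 1000000 in
/-- Lemma 8.8: bound on `(1+c_p(−u))(1+c_p(u)) − 1`. -/
theorem cp_product_bound (p : ℕ) (hp : 1 ≤ p) (u : ℝ) (h0 : 0 ≤ u) (h1 : u < 1) :
    |(1 + cpReal p (-u)) * (1 + cpReal p u) - 1| ≤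
      (2 * Real.sqrt (1 + u ^ 2) + a1 u * u ^ (p + 1)) * a1 u *
        u ^ (p + if p % 2 = 1 then 1 else 2) := by
  set x : ℝ := u ^ 2 with hxdef
  have hx0 : 0 ≤ x := sq_nonneg u
  have hx1 : x ≤ 1 := by nlinarith
  have hax : |(-x)| ≤ 1 := by rw [abs_neg, abs_of_nonneg hx0]; exact hx1
  have haxx : |x| ≤ 1 := by rw [abs_of_nonneg hx0]; exact hx1
  set m : ℕ := p / 2 with hmdef
  set sq : ℝ := Real.sqrt (1 + x) with hsq
  have hsq0 : 0 ≤ sq := Real.sqrt_nonneg _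
  -- the series for sqrt(1+x)
  have hplus : HasSum (fun k => -dd k * (-x) ^ k) sq := by
    have := hasSum_sqrt_one_sub (y := -x) hax
    rwa [sub_neg_eq_add] at this
  have hfs : Summable fun k => -dd k * (-x) ^ k := hplus.summable
  have hnormf : Summable fun k => ‖-dd k * (-x) ^ k‖ := summable_norm_f hax
  -- split off the first m+1 terms
  set T : ℝ := ∑' j, -dd (j + (m + 1)) * (-x) ^ (j + (m + 1)) with hTdef
  set S : ℝ := ∑ k ∈ Finset.Icc 1 m, ck k * u ^ (2 * k) with hSdef
  have hsplit : (∑ k ∈ range (m + 1), -dd k * (-x) ^ k) + T = sq :=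
    (hfs.sum_add_tsum_nat_add (m + 1)).trans hplus.tsum_eq
  have hpart : ∑ k ∈ range (m + 1), -dd k * (-x) ^ k = 1 + S := by
    rw [Finset.sum_range_succ']
    have h0' : -dd 0 * (-x) ^ 0 = 1 := by rw [dd_zero]; norm_num
    rw [h0', hSdef, ← Finset.Ico_add_one_right_eq_Icc, Finset.sum_Ico_eq_sum_range]
    rw [add_comm]
    congr 1
    apply Finset.sum_congr rfl
    intro i _
    rw [show 1 + i = i + 1 from by omega, ck_eq i, pow_mul, ← hxdef, neg_pow x (i + 1)]
    ring
  have h1S : 1 + S = sq - T := by linarith [hsplit, hpart]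
  -- tail bound
  have hTle : |T| ≤ a1 u * x ^ (m + 1) := by
    have hsnorm : Summable fun j => ‖-dd (j + (m + 1)) * (-x) ^ (j + (m + 1))‖ :=
      (summable_nat_add_iff (m + 1)).2 hnormf
    have hnorm_eq : ∀ j : ℕ, ‖-dd (j + (m + 1)) * (-x) ^ (j + (m + 1))‖
        = dd (j + (m + 1)) * x ^ (j + (m + 1)) := by
      intro j
      rw [Real.norm_eq_abs, abs_mul, abs_neg, abs_pow, abs_neg, abs_of_nonneg hx0,
        show j + (m + 1) = (j + m) + 1 from by omega, abs_of_pos (dd_succ_pos (j + m))]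
    have hsummaj : Summable fun j => dd (j + 1) * x ^ (j + 1) := by
      have h := ((summable_nat_add_iff 1).2 (hasSum_sqrt_one_sub (y := x) haxx).summable).neg
      simpa using h
    have hsum2 : Summable fun j => dd (j + 1) * x ^ (j + 1) * x ^ m := hsummaj.mul_right _
    have hstep1 : |T| ≤ ∑' j, dd (j + (m + 1)) * x ^ (j + (m + 1)) := by
      calc |T| ≤ ∑' j, ‖-dd (j + (m + 1)) * (-x) ^ (j + (m + 1))‖ :=
            norm_tsum_le_tsum_norm hsnorm
        _ = ∑' j, dd (j + (m + 1)) * x ^ (j + (m + 1)) := tsum_congr hnorm_eq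
    have hstep2 : ∑' j, dd (j + (m + 1)) * x ^ (j + (m + 1))
        ≤ ∑' j, dd (j + 1) * x ^ (j + 1) * x ^ m := by
      apply Summable.tsum_le_tsum _ _ hsum2
      · intro j
        have hd : dd (j + (m + 1)) ≤ dd (j + 1) := by
          rw [show j + (m + 1) = j + 1 + m from by omega]; exact dd_add_le j m
        have hp : x ^ (j + (m + 1)) = x ^ (j + 1) * x ^ m := by
          rw [← pow_add]; congr 1; omega
        rw [hp, ← mul_assoc]
        have := (dd_succ_pos (j + m)).le
        apply mul_le_mul_of_nonneg_right _ (pow_nonneg hx0 m)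
        exact mul_le_mul_of_nonneg_right hd (pow_nonneg hx0 (j + 1))
      · exact hsnorm.congr hnorm_eq
    have hstep3 : ∑' j, dd (j + 1) * x ^ (j + 1) * x ^ m
        = (1 - Real.sqrt (1 - x)) * x ^ m := by
      rw [tsum_mul_right]
      congr 1
      have h := (hasSum_sqrt_one_sub (y := x) haxx).tsum_eq
      rw [Summable.tsum_eq_zero_add (hasSum_sqrt_one_sub (y := x) haxx).summable] at h
      have h0' : -dd 0 * x ^ 0 = 1 := by rw [dd_zero]; norm_num
      rw [h0'] at h
      have ht : ∑' j, -dd (j + 1) * x ^ (j + 1) = -∑' j, dd (j + 1) * x ^ (j + 1) := by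
        rw [← tsum_neg]; apply tsum_congr; intro j; ring
      rw [ht] at h
      linarith
    have hstep4 : 1 - Real.sqrt (1 - x) = x * a1 u := by
      set s : ℝ := Real.sqrt (1 - x) with hsdef
      have hs2 : s ^ 2 = 1 - x := Real.sq_sqrt (by linarith)
      have hs0 : 0 ≤ s := Real.sqrt_nonneg _
      rw [a1, ← hxdef, ← hsdef]
      have hsne : 1 + s ≠ 0 := by positivity
      field_simp
      nlinarith [hs2]
      
    calc |T| ≤ (1 - Real.sqrt (1 - x)) * x ^ m := hstep1.trans (hstep2.trans hstep3.le)
      _ = a1 u * x ^ (m + 1) := by rw [hstep4]; ring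
  -- exponent bookkeeping
  have hmod : 2 * m + p % 2 = p := Nat.div_add_mod p 2 ▸ by omega
  have hexp : p + (if p % 2 = 1 then 1 else 2) = 2 * m + 2 := by
    split_ifs with h <;> omega
  have hxm : x ^ (m + 1) = u ^ (2 * m + 2) := by
    rw [hxdef, ← pow_mul, show 2 * (m + 1) = 2 * m + 2 from by omega]
  have hu1 : u ≤ 1 := h1.le
  have ha10 : 0 ≤ a1 u := by
    rw [a1]; positivity
  have hTle2 : |T| ≤ a1 u * u ^ (p + 1) := by
    calc |T| ≤ a1 u * x ^ (m + 1) := hTle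
      _ ≤ a1 u * u ^ (p + 1) := by
          apply mul_le_mul_of_nonneg_left _ ha10
          rw [hxm]
          exact pow_le_pow_of_le_one h0 hu1 (by omega)
  -- the product identity
  have hcpm : cpReal p (-u) = S - u := by
    rw [cpReal, hSdef, ← hmdef]
    have : ∀ k ∈ Finset.Icc 1 m, ck k * (-u) ^ (2 * k) = ck k * u ^ (2 * k) := by
      intro k _
      congr 1
      rw [pow_mul, pow_mul, neg_sq]
    rw [Finset.sum_congr rfl this]
    ring
  have hcpp : cpReal p u = S + u := by rw [cpReal, hSdef, ← hmdef]; ring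
  have hsqsq : sq ^ 2 = 1 + x := Real.sq_sqrt (by linarith)
  have hexpr : (1 + cpReal p (-u)) * (1 + cpReal p u) - 1 = T ^ 2 - 2 * sq * T := by
    rw [hcpm, hcpp]
    calc (1 + (S - u)) * (1 + (S + u)) - 1 = (1 + S) ^ 2 - u ^ 2 - 1 := by ring
      _ = (sq - T) ^ 2 - u ^ 2 - 1 := by rw [h1S]
      _ = T ^ 2 - 2 * sq * T := by linear_combination hsqsq + hxdef
  rw [hexpr, hexp]
  have habs : |T ^ 2 - 2 * sq * T| ≤ |T| * (|T| + 2 * sq) := by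
    calc |T ^ 2 - 2 * sq * T| = |T * (T - 2 * sq)| := by ring_nf
      _ = |T| * |T - 2 * sq| := abs_mul _ _
      _ ≤ |T| * (|T| + 2 * sq) := by
          apply mul_le_mul_of_nonneg_left _ (abs_nonneg T)
          calc |T - 2 * sq| ≤ |T| + |2 * sq| := abs_sub _ _
            _ = |T| + 2 * sq := by
                rw [abs_of_nonneg (show (0:ℝ) ≤ 2 * sq by linarith)]
  have hT0 : 0 ≤ |T| := abs_nonneg T
  have hb0 : 0 ≤ a1 u * u ^ (2 * m + 2) := by positivity
  have hTle3 : |T| ≤ a1 u * u ^ (2 * m + 2) := by rw [← hxm]; exact hTle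
  calc |T ^ 2 - 2 * sq * T| ≤ |T| * (|T| + 2 * sq) := habs
    _ ≤ (a1 u * u ^ (2 * m + 2)) * (a1 u * u ^ (p + 1) + 2 * sq) :=
        mul_le_mul hTle3 (by linarith [hTle2]) (by linarith [hT0, hsq0]) hb0
    _ = (2 * sq + a1 u * u ^ (p + 1)) * a1 u * u ^ (2 * m + 2) := by ring
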